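/- arXiv:2011.07192 — 2 statements merged into one kernel-verified Lean document; each statement's English description precedes it below -/
import Mathlib

section
/- For β > 1 and D̃ > 0, with γ₊ = (−β−D̃+√(β²+2(β−2)D̃+D̃²))/2, one has D̃(1+γ₊) + βγ₊ < 0. -/
/-- For β > 1 and D̃ > 0, with γ₊ = (−β−D̃+√(β²+2(β−2)D̃+D̃²))/2,
one has D̃(1+γ₊) + βγ₊ < 0. -/
theorem Gplus_sign (β D : ℝ) (hβ : 1 < β) (hD : 0 < D) :
    D * (1 + (-β - D + Real.sqrt (β ^ 2 + 2 * (β - 2) * D + D ^ 2)) / 2)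
      + β * ((-β - D + Real.sqrt (β ^ 2 + 2 * (β - 2) * D + D ^ 2)) / 2) < 0 := by
  set s := Real.sqrt (β ^ 2 + 2 * (β - 2) * D + D ^ 2) with hs
  have hΔ : 0 ≤ β ^ 2 + 2 * (β - 2) * D + D ^ 2 := by nlinarith [sq_nonneg (β + D - 2), sq_nonneg (1 - D)]
  have hs2 : s ^ 2 = β ^ 2 + 2 * (β - 2) * D + D ^ 2 := Real.sq_sqrt hΔ
  have hs0 : 0 ≤ s := Real.sqrt_nonneg _
  have key : (β + D) * s < (β + D) ^ 2 - 2 * D := by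
    have hpos : 0 < (β + D) ^ 2 - 2 * D := by nlinarith
    nlinarith [sq_nonneg ((β + D) * s - ((β + D) ^ 2 - 2 * D)), mul_pos hD hD,
      mul_nonneg (mul_nonneg (le_of_lt hD) hs0) (by positivity : (0:ℝ) ≤ β + D)]
  nlinarith [key]
end

section
/- For β > 1 and D̃ > 0, with γ₋ = (−β−D̃−√(β²+2(β−2)D̃+D̃²))/2, one has D̃(1+γ₋) + βγ₋ < 0; consequently, since 1+γ₋ < 0, the quantity (D̃(1+γ₋)+βγ₋)/(1+γ₋) is positive. -/
/-- For β > 1 and D̃ > 0, with γ₋ = (−β−D̃−√(β²+2(β−2)D̃+D̃²))/2, one has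
D̃(1+γ₋) + βγ₋ < 0; consequently, since 1+γ₋ < 0, the quantity
(D̃(1+γ₋)+βγ₋)/(1+γ₋) is positive. -/
theorem Gminus_sign (β D : ℝ) (hβ : 1 < β) (hD : 0 < D) :
    D * (1 + (-β - D - Real.sqrt (β ^ 2 + 2 * (β - 2) * D + D ^ 2)) / 2)
        + β * ((-β - D - Real.sqrt (β ^ 2 + 2 * (β - 2) * D + D ^ 2)) / 2) < 0 ∧
    0 < (D * (1 + (-β - D - Real.sqrt (β ^ 2 + 2 * (β - 2) * D + D ^ 2)) / 2)
          + β * ((-β - D - Real.sqrt (β ^ 2 + 2 * (β - 2) * D + D ^ 2)) / 2))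
        / (1 + (-β - D - Real.sqrt (β ^ 2 + 2 * (β - 2) * D + D ^ 2)) / 2) := by
  set s := Real.sqrt (β ^ 2 + 2 * (β - 2) * D + D ^ 2) with hs_def
  have hΔnn : 0 ≤ β ^ 2 + 2 * (β - 2) * D + D ^ 2 := by nlinarith [sq_nonneg (1 - D), sq_nonneg (β - 1)]
  have hs2 : s ^ 2 = β ^ 2 + 2 * (β - 2) * D + D ^ 2 := Real.sq_sqrt hΔnn
  have hsnn : 0 ≤ s := Real.sqrt_nonneg _
  have hkey : 2 - β - D < s := by nlinarith [sq_nonneg (s - (2 - β - D))]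
  set γ := (-β - D - s) / 2 with hγ_def
  have h1 : 1 + γ < 0 := by rw [hγ_def]; linarith
  have hγneg : γ < 0 := by linarith
  have hnum : D * (1 + γ) + β * γ < 0 := by nlinarith
  exact ⟨hnum, div_pos_of_neg_of_neg hnum h1⟩
end
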